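/- Let p : ℝ^d → [0,∞) be a bounded continuous probability density with ∫ p² dx > 0, and let P be the probability measure with density p with respect to Lebesgue measure. For ε > 0 define the Gaussian kernel k_ε(x,y) = exp(−‖x−y‖²/(4ε)), the smoothed density p_ε(x) = ∫ k_ε(x,y) p(y) dy, and the probability measure S_ε(B) = ∫_B p_ε(x) p(x) dx / ∫_{ℝ^d} p_ε(x) p(x) dx. Then for every Borel set B ⊆ ℝ^d, lim_{ε→0⁺} S_ε(B) = ∫_B p(x)² dx / ∫_{ℝ^d} p(x)² dx, i.e., the stationary distributions S_ε converge setwise to the measure S(B) = ∫_B p dP / ∫ p dP. -/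

import Mathlib

open MeasureTheory Filter

section Aux

variable {d : ℕ}

lemma gauss_integrable : Integrable (fun u : EuclideanSpace ℝ (Fin d) => Real.exp (-‖u‖ ^ 2)) := by
  have h := (GaussianFourier.integrable_cexp_neg_mul_sq_norm_add
      (V := EuclideanSpace ℝ (Fin d)) (b := 1) (by norm_num) 0 0).re
  refine h.congr (Filter.Eventually.of_forall fun u => ?_)
  simp [zero_mul, add_zero, neg_mul, one_mul, ← Complex.ofReal_pow, ← Complex.ofReal_neg,
    ← Complex.ofReal_exp]

lemma gauss_integral :
    ∫ u : EuclideanSpace ℝ (Fin d), Real.exp (-‖u‖ ^ 2) = Real.pi ^ ((d : ℝ) / 2) := by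
  have h := GaussianFourier.integral_rexp_neg_mul_sq_norm
    (V := EuclideanSpace ℝ (Fin d)) (b := 1) one_pos
  simpa [finrank_euclideanSpace_fin] using h

variable {p : EuclideanSpace ℝ (Fin d) → ℝ} {C : ℝ}

lemma inner_bound_ptwise (hp_nonneg : ∀ x, 0 ≤ p x) (hC : ∀ x, p x ≤ C)
    (t : ℝ) (x u : EuclideanSpace ℝ (Fin d)) :
    ‖Real.exp (-‖u‖ ^ 2) * p (x - t • u)‖ ≤ C * Real.exp (-‖u‖ ^ 2) := by
  have h1 : 0 ≤ Real.exp (-‖u‖ ^ 2) * p (x - t • u) :=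
    mul_nonneg (Real.exp_pos _).le (hp_nonneg _)
  rw [Real.norm_eq_abs, abs_of_nonneg h1, mul_comm C]
  exact mul_le_mul_of_nonneg_left (hC _) (Real.exp_pos _).le

lemma inner_integrable (hp_cont : Continuous p) (hp_nonneg : ∀ x, 0 ≤ p x)
    (hC : ∀ x, p x ≤ C) (t : ℝ) (x : EuclideanSpace ℝ (Fin d)) :
    Integrable (fun u : EuclideanSpace ℝ (Fin d) =>
      Real.exp (-‖u‖ ^ 2) * p (x - t • u)) := by
  refine (gauss_integrable.const_mul C).mono'
    ((Real.continuous_exp.comp ((continuous_norm.pow 2).neg)).mul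
      (hp_cont.comp (continuous_const.sub (continuous_const_smul t)))).aestronglyMeasurable
    (Filter.Eventually.of_forall fun u => inner_bound_ptwise hp_nonneg hC t x u)

lemma inner_nonneg (hp_nonneg : ∀ x, 0 ≤ p x) (t : ℝ) (x : EuclideanSpace ℝ (Fin d)) :
    0 ≤ ∫ u : EuclideanSpace ℝ (Fin d), Real.exp (-‖u‖ ^ 2) * p (x - t • u) :=
  integral_nonneg fun u => mul_nonneg (Real.exp_pos _).le (hp_nonneg _)

lemma inner_le (hp_cont : Continuous p) (hp_nonneg : ∀ x, 0 ≤ p x)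
    (hC : ∀ x, p x ≤ C) (t : ℝ) (x : EuclideanSpace ℝ (Fin d)) :
    ∫ u : EuclideanSpace ℝ (Fin d), Real.exp (-‖u‖ ^ 2) * p (x - t • u)
      ≤ C * Real.pi ^ ((d : ℝ) / 2) := by
  have h := integral_mono (inner_integrable hp_cont hp_nonneg hC t x)
    (gauss_integrable.const_mul C) (fun u => by
      have h2 := inner_bound_ptwise hp_nonneg hC t x u
      exact (le_abs_self _).trans (by rwa [Real.norm_eq_abs] at h2))
  calc ∫ u : EuclideanSpace ℝ (Fin d), Real.exp (-‖u‖ ^ 2) * p (x - t • u)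
      ≤ ∫ u : EuclideanSpace ℝ (Fin d), C * Real.exp (-‖u‖ ^ 2) := h
    _ = C * Real.pi ^ ((d : ℝ) / 2) := by rw [integral_const_mul, gauss_integral]

lemma inner_continuous (hp_cont : Continuous p) (hp_nonneg : ∀ x, 0 ≤ p x)
    (hC : ∀ x, p x ≤ C) (t : ℝ) :
    Continuous (fun x : EuclideanSpace ℝ (Fin d) =>
      ∫ u : EuclideanSpace ℝ (Fin d), Real.exp (-‖u‖ ^ 2) * p (x - t • u)) := by
  rw [continuous_iff_continuousAt]
  intro x₀
  refine continuousAt_of_dominated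
    (Filter.Eventually.of_forall fun x =>
      (inner_integrable hp_cont hp_nonneg hC t x).aestronglyMeasurable)
    (Filter.Eventually.of_forall fun x =>
      Filter.Eventually.of_forall fun u => inner_bound_ptwise hp_nonneg hC t x u)
    (gauss_integrable.const_mul C)
    (Filter.Eventually.of_forall fun u => ?_)
  exact ((continuous_const.mul
    (hp_cont.comp (continuous_id.sub continuous_const))).continuousAt)

/-- Pointwise convergence of the rescaled inner integral as `t → 0`. -/
lemma inner_tendsto (hp_cont : Continuous p) (hp_nonneg : ∀ x, 0 ≤ p x)
    (hC : ∀ x, p x ≤ C) (x : EuclideanSpace ℝ (Fin d)) :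
    Tendsto (fun t : ℝ =>
        ∫ u : EuclideanSpace ℝ (Fin d), Real.exp (-‖u‖ ^ 2) * p (x - t • u))
      (nhds 0) (nhds (Real.pi ^ ((d : ℝ) / 2) * p x)) := by
  have key : Tendsto (fun t : ℝ =>
      ∫ u : EuclideanSpace ℝ (Fin d), Real.exp (-‖u‖ ^ 2) * p (x - t • u))
      (nhds 0) (nhds (∫ u : EuclideanSpace ℝ (Fin d), Real.exp (-‖u‖ ^ 2) * p x)) := by
    refine tendsto_integral_filter_of_dominated_convergence
      (fun u => C * Real.exp (-‖u‖ ^ 2))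
      (Filter.Eventually.of_forall fun t =>
        (inner_integrable hp_cont hp_nonneg hC t x).aestronglyMeasurable)
      (Filter.Eventually.of_forall fun t =>
        Filter.Eventually.of_forall fun u => inner_bound_ptwise hp_nonneg hC t x u)
      (gauss_integrable.const_mul C)
      (Filter.Eventually.of_forall fun u => ?_)
    have h2 : Tendsto (fun t : ℝ => x - t • u) (nhds 0) (nhds x) := by
      have hcont : Continuous fun t : ℝ => x - t • u :=
        continuous_const.sub (continuous_id.smul continuous_const)
      simpa using hcont.tendsto 0
    exact tendsto_const_nhds.mul ((hp_cont.tendsto x).comp h2)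
  rw [integral_mul_const, gauss_integral] at key
  exact key

/-- Change of variables: the Gaussian-kernel integral in substituted form. -/
lemma inner_subst {ε : ℝ} (hε : 0 < ε) (x : EuclideanSpace ℝ (Fin d)) :
    (∫ y : EuclideanSpace ℝ (Fin d), Real.exp (-(‖x - y‖ ^ 2) / (4 * ε)) * p y)
      = (Real.sqrt (4 * ε)) ^ d *
        ∫ u : EuclideanSpace ℝ (Fin d),
          Real.exp (-‖u‖ ^ 2) * p (x - Real.sqrt (4 * ε) • u) := by
  set s := Real.sqrt (4 * ε) with hs_def
  have hs_pos : 0 < s := Real.sqrt_pos.2 (by linarith)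
  have hs_sq : s ^ 2 = 4 * ε := Real.sq_sqrt (by linarith)
  set f : EuclideanSpace ℝ (Fin d) → ℝ :=
    fun z => Real.exp (-(‖z‖ ^ 2) / (4 * ε)) * p (x - z) with hf_def
  have step1 : (∫ y : EuclideanSpace ℝ (Fin d),
      Real.exp (-(‖x - y‖ ^ 2) / (4 * ε)) * p y)
      = ∫ z : EuclideanSpace ℝ (Fin d), f z := by
    rw [← integral_sub_left_eq_self f volume x]
    refine integral_congr_ae (Filter.Eventually.of_forall fun y => ?_)
    simp [hf_def, sub_sub_cancel]
  have step3 : ∀ u : EuclideanSpace ℝ (Fin d),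
      f (s • u) = Real.exp (-‖u‖ ^ 2) * p (x - s • u) := by
    intro u
    have hnorm : ‖s • u‖ ^ 2 = (4 * ε) * ‖u‖ ^ 2 := by
      rw [norm_smul, Real.norm_eq_abs, abs_of_nonneg hs_pos.le, mul_pow, hs_sq]
    simp only [hf_def, hnorm]
    congr 1
    rw [show -((4 * ε) * ‖u‖ ^ 2) / (4 * ε) = -‖u‖ ^ 2 by field_simp]
  have step2 : ∫ u : EuclideanSpace ℝ (Fin d),
      Real.exp (-‖u‖ ^ 2) * p (x - s • u)
      = (s ^ d)⁻¹ * ∫ z : EuclideanSpace ℝ (Fin d), f z := by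
    have h := MeasureTheory.Measure.integral_comp_smul_of_nonneg
      (μ := (volume : Measure (EuclideanSpace ℝ (Fin d)))) (f := f) (R := s) (hR := hs_pos.le)
    rw [finrank_euclideanSpace_fin, smul_eq_mul] at h
    rw [← h]
    refine integral_congr_ae (Filter.Eventually.of_forall fun u => ?_)
    exact (step3 u).symm
  rw [step1, step2]
  field_simp

end Aux

/-- Setwise convergence of the stationary distributions of the Gaussian
diffusion: for a bounded continuous density `p` on `ℝ^d`, with
`p_ε(x) = ∫ exp(-‖x-y‖²/(4ε)) p(y) dy` and
`S_ε(B) = ∫_B p_ε p / ∫ p_ε p`, one has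
`S_ε(B) → ∫_B p² / ∫ p²` as `ε → 0⁺`, for every Borel set `B`. -/
theorem gaussian_stationary_distribution_limit
    (d : ℕ) (p : EuclideanSpace ℝ (Fin d) → ℝ)
    (hp_cont : Continuous p) (hp_nonneg : ∀ x, 0 ≤ p x)
    (hp_bdd : ∃ C : ℝ, ∀ x, p x ≤ C)
    (hp_int : Integrable p volume)
    (hp_dens : ∫ x, p x = 1)
    (hp2 : 0 < ∫ x, (p x) ^ 2)
    (B : Set (EuclideanSpace ℝ (Fin d))) (hB : MeasurableSet B) :
    Tendsto (fun ε : ℝ =>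
        (∫ x in B, (∫ y, Real.exp (-(‖x - y‖ ^ 2) / (4 * ε)) * p y) * p x) /
        (∫ x, (∫ y, Real.exp (-(‖x - y‖ ^ 2) / (4 * ε)) * p y) * p x))
      (nhdsWithin 0 (Set.Ioi 0))
      (nhds ((∫ x in B, (p x) ^ 2) / ∫ x, (p x) ^ 2)) := by
  obtain ⟨C, hC⟩ := hp_bdd
  set K : ℝ := Real.pi ^ ((d : ℝ) / 2) with hK_def
  have hK_pos : 0 < K := Real.rpow_pos_of_pos Real.pi_pos _
  have hsqrt : Tendsto (fun ε : ℝ => Real.sqrt (4 * ε))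
      (nhdsWithin 0 (Set.Ioi 0)) (nhds 0) := by
    have h1 : Tendsto (fun ε : ℝ => 4 * ε) (nhdsWithin 0 (Set.Ioi 0)) (nhds 0) := by
      have h0 : Continuous fun ε : ℝ => 4 * ε := continuous_const.mul continuous_id
      simpa using (h0.tendsto 0).mono_left nhdsWithin_le_nhds
    have h2 := (Real.continuous_sqrt.tendsto 0).comp h1
    rw [Real.sqrt_zero] at h2
    exact h2
  have main : ∀ (A : Set (EuclideanSpace ℝ (Fin d))),
      Tendsto (fun ε : ℝ =>
          ∫ x in A, (∫ u, Real.exp (-‖u‖ ^ 2) * p (x - Real.sqrt (4 * ε) • u)) * p x)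
        (nhdsWithin 0 (Set.Ioi 0)) (nhds (K * ∫ x in A, (p x) ^ 2)) := by
    intro A
    have target : (∫ x in A, K * (p x) ^ 2) = K * ∫ x in A, (p x) ^ 2 :=
      integral_const_mul _ _
    rw [← target]
    refine tendsto_integral_filter_of_dominated_convergence
      (fun x => (C * K) * p x)
      (Filter.Eventually.of_forall fun ε =>
        (((inner_continuous hp_cont hp_nonneg hC _).mul hp_cont).aestronglyMeasurable).restrict)
      (Filter.Eventually.of_forall fun ε => Filter.Eventually.of_forall fun x => ?_)
      (((hp_int.const_mul (C * K))).restrict)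
      (Filter.Eventually.of_forall fun x => ?_)
    · have h0 : 0 ≤ (∫ u, Real.exp (-‖u‖ ^ 2) * p (x - Real.sqrt (4 * ε) • u)) * p x :=
        mul_nonneg (inner_nonneg hp_nonneg _ _) (hp_nonneg _)
      rw [Real.norm_eq_abs, abs_of_nonneg h0]
      exact mul_le_mul_of_nonneg_right (inner_le hp_cont hp_nonneg hC _ _) (hp_nonneg _)
    · have h1 := (inner_tendsto hp_cont hp_nonneg hC x).comp hsqrt
      have h2 := h1.mul_const (p x)
      convert h2 using 2
      · rfl
      rw [hK_def]; ring
  have eqform : ∀ᶠ ε in nhdsWithin (0:ℝ) (Set.Ioi 0),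
      (∫ x in B, (∫ y, Real.exp (-(‖x - y‖ ^ 2) / (4 * ε)) * p y) * p x) /
        (∫ x, (∫ y, Real.exp (-(‖x - y‖ ^ 2) / (4 * ε)) * p y) * p x)
      = (∫ x in B, (∫ u, Real.exp (-‖u‖ ^ 2) * p (x - Real.sqrt (4 * ε) • u)) * p x) /
        (∫ x, (∫ u, Real.exp (-‖u‖ ^ 2) * p (x - Real.sqrt (4 * ε) • u)) * p x) := by
    filter_upwards [self_mem_nhdsWithin] with ε hε
    have hε' : (0:ℝ) < ε := hε
    have hs_pos : 0 < Real.sqrt (4 * ε) := Real.sqrt_pos.2 (by linarith)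
    have hsd : (0:ℝ) < Real.sqrt (4 * ε) ^ d := pow_pos hs_pos d
    have hnum : (∫ x in B, (∫ y, Real.exp (-(‖x - y‖ ^ 2) / (4 * ε)) * p y) * p x)
        = Real.sqrt (4 * ε) ^ d *
          ∫ x in B, (∫ u, Real.exp (-‖u‖ ^ 2) * p (x - Real.sqrt (4 * ε) • u)) * p x := by
      rw [← integral_const_mul]
      refine integral_congr_ae (Filter.Eventually.of_forall fun x => ?_)
      simp only [inner_subst (p := p) hε']; ring
    have hden : (∫ x, (∫ y, Real.exp (-(‖x - y‖ ^ 2) / (4 * ε)) * p y) * p x)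
        = Real.sqrt (4 * ε) ^ d *
          ∫ x, (∫ u, Real.exp (-‖u‖ ^ 2) * p (x - Real.sqrt (4 * ε) • u)) * p x := by
      rw [← integral_const_mul]
      refine integral_congr_ae (Filter.Eventually.of_forall fun x => ?_)
      simp only [inner_subst (p := p) hε']; ring
    rw [hnum, hden, mul_div_mul_left _ _ (ne_of_gt hsd)]
  have hnum := main B
  have hden := main Set.univ
  simp only [Measure.restrict_univ] at hden
  have hlim := hnum.div hden (by positivity)
  rw [mul_div_mul_left _ _ (ne_of_gt hK_pos)] at hlim
  exact Tendsto.congr' (eqform.mono fun ε h => h.symm) hlim
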